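/- Let Q be an axis-parallel rectangle and consider the local mixed finite volume system: find the Raviart–Thomas field u = (a+bx, c+dy) such that ∫_Q (u + β∇p)·∇χ dx = 0 for all χ in span{1, x, y, x²−y²} and ∫_Q div u dx = ∫_Q f dx, where p ∈ span{1,x,y,x²−y²} and β > 0 are given. Then u exists and is unique, and its edge normal components are given explicitly by |eᵢ|(u·n)|_{eᵢ} = ∫_Q f̄ φᵢ dx − ∫_Q β∇p·∇φᵢ dx, where φᵢ is the local Rannacher–Turek basis function with edge average 1 on eᵢ and 0 on the other edges, and f̄ is the mean of f over Q. -/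

import Mathlib

open MeasureTheory intervalIntegral

lemma int1 (a b c0 c1 c2 : ℝ) (g : ℝ → ℝ)
    (hg : ∀ t, g t = c0 + c1*t + c2*t^2) :
    ∫ t in a..b, g t = c0*(b-a) + c1*(b^2-a^2)/2 + c2*(b^3-a^3)/3 := by
  have h1 : IntervalIntegrable (fun _ : ℝ => c0) volume a b := intervalIntegrable_const
  have h2 : IntervalIntegrable (fun t : ℝ => c1*t) volume a b :=
    (continuous_const.mul continuous_id).intervalIntegrable a b
  have h3 : IntervalIntegrable (fun t : ℝ => c2*t^2) volume a b :=
    (continuous_const.mul (continuous_pow 2)).intervalIntegrable a b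
  have : (∫ t in a..b, g t) = ∫ t in a..b, ((c0 + c1*t) + c2*t^2) := by
    apply intervalIntegral.integral_congr
    intro t _; exact hg t
  rw [this, intervalIntegral.integral_add (h1.add h2) h3,
    intervalIntegral.integral_add h1 h2, intervalIntegral.integral_const,
    intervalIntegral.integral_const_mul, intervalIntegral.integral_const_mul,
    integral_id, integral_pow]
  simp only [smul_eq_mul]; push_cast; ring

lemma int2 (x₀ y₀ h k : ℝ) (g : ℝ → ℝ → ℝ)
    (c00 c10 c20 c01 c11 c21 c02 c12 c22 : ℝ)
    (hg : ∀ x y, g x y = (c00 + c10*x + c20*x^2) + (c01 + c11*x + c21*x^2)*y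
        + (c02 + c12*x + c22*x^2)*y^2) :
    (∫ x in x₀..(x₀+h), ∫ y in y₀..(y₀+k), g x y)
      = (c00*h + c10*((x₀+h)^2-x₀^2)/2 + c20*((x₀+h)^3-x₀^3)/3)*k
        + (c01*h + c11*((x₀+h)^2-x₀^2)/2 + c21*((x₀+h)^3-x₀^3)/3)*((y₀+k)^2-y₀^2)/2
        + (c02*h + c12*((x₀+h)^2-x₀^2)/2 + c22*((x₀+h)^3-x₀^3)/3)*((y₀+k)^3-y₀^3)/3 := by
  have inner : ∀ x, (∫ y in y₀..(y₀+k), g x y)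
      = (c00 + c10*x + c20*x^2)*k + (c01 + c11*x + c21*x^2)*((y₀+k)^2-y₀^2)/2
          + (c02 + c12*x + c22*x^2)*((y₀+k)^3-y₀^3)/2/3*2 := by
    intro x
    rw [int1 y₀ (y₀+k) _ _ _ _ (hg x)]
    ring
  simp only [inner]
  rw [int1 x₀ (x₀+h)
      (c00*k + c01*((y₀+k)^2-y₀^2)/2 + c02*((y₀+k)^3-y₀^3)/3)
      (c10*k + c11*((y₀+k)^2-y₀^2)/2 + c12*((y₀+k)^3-y₀^3)/3)
      (c20*k + c21*((y₀+k)^2-y₀^2)/2 + c22*((y₀+k)^3-y₀^3)/3)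
      _ (fun x => by ring)]
  ring


/-- The Rannacher–Turek shape function given by a coefficient tuple. -/
noncomputable def rtphi (c : ℝ × ℝ × ℝ × ℝ) (x y : ℝ) : ℝ :=
  c.1 + c.2.1*x + c.2.2.1*y + c.2.2.2*(x^2 - y^2)

/-- Edge averages of a Rannacher–Turek function over the four edges
(bottom, right, top, left) of `Q = [x₀,x₀+h]×[y₀,y₀+k]`. -/
noncomputable def rtEdgeAvg (x₀ y₀ h k : ℝ) (c : ℝ × ℝ × ℝ × ℝ) : Fin 4 → ℝ :=
  ![(1/h) * ∫ t in x₀..(x₀+h), rtphi c t y₀,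
    (1/k) * ∫ t in y₀..(y₀+k), rtphi c (x₀+h) t,
    (1/h) * ∫ t in x₀..(x₀+h), rtphi c t (y₀+k),
    (1/k) * ∫ t in y₀..(y₀+k), rtphi c x₀ t]

/-- Lengths of the four edges of `Q`. -/
noncomputable def edgeLen (h k : ℝ) : Fin 4 → ℝ := ![h, k, h, k]

/-- Constant value of `u·n` (outward normal) on each edge of `Q` for the
Raviart–Thomas field `u = (a+bx, c+dy)`. -/
noncomputable def rtUN (x₀ y₀ h k : ℝ) (u : ℝ × ℝ × ℝ × ℝ) : Fin 4 → ℝ :=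
  ![-(u.2.2.1 + u.2.2.2*y₀),
    u.1 + u.2.1*(x₀+h),
    u.2.2.1 + u.2.2.2*(y₀+k),
    -(u.1 + u.2.1*x₀)]

/-- The local mixed finite volume conditions: `∫_Q (u + β∇p)·∇χ = 0` for every
Rannacher–Turek `χ`, and `∫_Q div u = ∫_Q f`. -/
noncomputable def mfvmCond (x₀ y₀ h k β : ℝ) (p : ℝ × ℝ × ℝ × ℝ)
    (f : ℝ × ℝ → ℝ) (u : ℝ × ℝ × ℝ × ℝ) : Prop :=
  (∀ χ : ℝ × ℝ × ℝ × ℝ,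
      (∫ x in x₀..(x₀+h), ∫ y in y₀..(y₀+k),
        ((u.1 + u.2.1*x + β*(p.2.1 + 2*p.2.2.2*x)) * (χ.2.1 + 2*χ.2.2.2*x)
          + (u.2.2.1 + u.2.2.2*y + β*(p.2.2.1 - 2*p.2.2.2*y)) * (χ.2.2.1 - 2*χ.2.2.2*y)))
        = 0)
  ∧ (∫ x in x₀..(x₀+h), ∫ y in y₀..(y₀+k), (u.2.1 + u.2.2.2))
      = ∫ z in (Set.Icc x₀ (x₀+h)) ×ˢ (Set.Icc y₀ (y₀+k)), f z

/-- Existence and uniqueness of the local MFVM velocity, together with the local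
recovery formula `|eᵢ| (u·n)|_{eᵢ} = ∫_Q f̄ φᵢ − ∫_Q β∇p·∇φᵢ`, where `φᵢ` is the
Rannacher–Turek basis function with edge averages `δᵢⱼ` and `f̄` is the mean of `f`. -/
theorem stmt9 (x₀ y₀ h k β : ℝ) (hh : 0 < h) (hk : 0 < k) (hβ : 0 < β)
    (p : ℝ × ℝ × ℝ × ℝ) (f : ℝ × ℝ → ℝ)
    (hf : IntegrableOn f ((Set.Icc x₀ (x₀+h)) ×ˢ (Set.Icc y₀ (y₀+k)))) :
    (∃! u : ℝ × ℝ × ℝ × ℝ, mfvmCond x₀ y₀ h k β p f u)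
    ∧ (∀ u : ℝ × ℝ × ℝ × ℝ, mfvmCond x₀ y₀ h k β p f u →
        ∀ φ : Fin 4 → ℝ × ℝ × ℝ × ℝ,
          (∀ i j : Fin 4, rtEdgeAvg x₀ y₀ h k (φ i) j = if i = j then 1 else 0) →
          ∀ i : Fin 4,
            edgeLen h k i * rtUN x₀ y₀ h k u i
              = (∫ x in x₀..(x₀+h), ∫ y in y₀..(y₀+k),
                  ((∫ z in (Set.Icc x₀ (x₀+h)) ×ˢ (Set.Icc y₀ (y₀+k)), f z) / (h*k))
                    * rtphi (φ i) x y)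
                - (∫ x in x₀..(x₀+h), ∫ y in y₀..(y₀+k),
                    β * ((p.2.1 + 2*p.2.2.2*x) * ((φ i).2.1 + 2*(φ i).2.2.2*x)
                      + (p.2.2.1 - 2*p.2.2.2*y) * ((φ i).2.2.1 - 2*(φ i).2.2.2*y)))) := by

  set Fv : ℝ := ∫ z in (Set.Icc x₀ (x₀+h)) ×ˢ (Set.Icc y₀ (y₀+k)), f z with hFv
  have hhk : h*k ≠ 0 := by positivity
  have hh2k2 : h^2+k^2 ≠ 0 := by positivity
  -- the main bilinear form, computed
  have main : ∀ u χ : ℝ × ℝ × ℝ × ℝ,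
      (∫ x in x₀..(x₀+h), ∫ y in y₀..(y₀+k),
        ((u.1 + u.2.1*x + β*(p.2.1 + 2*p.2.2.2*x)) * (χ.2.1 + 2*χ.2.2.2*x)
          + (u.2.2.1 + u.2.2.2*y + β*(p.2.2.1 - 2*p.2.2.2*y)) * (χ.2.2.1 - 2*χ.2.2.2*y)))
      = h*k*((u.1+β*p.2.1) + (u.2.1+2*β*p.2.2.2)*(x₀+h/2)) * χ.2.1
        + h*k*((u.2.2.1+β*p.2.2.1) + (u.2.2.2-2*β*p.2.2.2)*(y₀+k/2)) * χ.2.2.1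
        + (h*k*(2*x₀+h)*((u.1+β*p.2.1) + (u.2.1+2*β*p.2.2.2)*(x₀+h/2))
            - h*k*(2*y₀+k)*((u.2.2.1+β*p.2.2.1) + (u.2.2.2-2*β*p.2.2.2)*(y₀+k/2))
            + (h*k/6)*(h^2*(u.2.1+2*β*p.2.2.2) - k^2*(u.2.2.2-2*β*p.2.2.2))) * χ.2.2.2 := by
    intro u χ
    exact (int2 x₀ y₀ h k _
      ((u.1+β*p.2.1)*χ.2.1 + (u.2.2.1+β*p.2.2.1)*χ.2.2.1)
      ((u.2.1+2*β*p.2.2.2)*χ.2.1 + 2*(u.1+β*p.2.1)*χ.2.2.2)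
      (2*(u.2.1+2*β*p.2.2.2)*χ.2.2.2)
      ((u.2.2.2-2*β*p.2.2.2)*χ.2.2.1 - 2*(u.2.2.1+β*p.2.2.1)*χ.2.2.2)
      0 0
      (-(2*(u.2.2.2-2*β*p.2.2.2)*χ.2.2.2))
      0 0
      (fun x y => by ring)).trans (by ring)
  have divmain : ∀ u : ℝ × ℝ × ℝ × ℝ,
      (∫ x in x₀..(x₀+h), ∫ y in y₀..(y₀+k), (u.2.1 + u.2.2.2))
        = h*k*(u.2.1 + u.2.2.2) := by
    intro u
    exact (int2 x₀ y₀ h k _ (u.2.1+u.2.2.2) 0 0 0 0 0 0 0 0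
      (fun x y => by ring)).trans (by ring)
  have cond_iff : ∀ u : ℝ × ℝ × ℝ × ℝ, mfvmCond x₀ y₀ h k β p f u ↔
      ((u.1+β*p.2.1) + (u.2.1+2*β*p.2.2.2)*(x₀+h/2) = 0 ∧
       (u.2.2.1+β*p.2.2.1) + (u.2.2.2-2*β*p.2.2.2)*(y₀+k/2) = 0 ∧
       h^2*(u.2.1+2*β*p.2.2.2) - k^2*(u.2.2.2-2*β*p.2.2.2) = 0 ∧
       h*k*(u.2.1+u.2.2.2) = Fv) := by
    intro u
    constructor
    · intro hu
      obtain ⟨h1, h2⟩ := hu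
      have e1 := (main u (0,1,0,0)).symm.trans (h1 (0,1,0,0))
      have e2 := (main u (0,0,1,0)).symm.trans (h1 (0,0,1,0))
      have e3 := (main u (0,0,0,1)).symm.trans (h1 (0,0,0,1))
      simp only [] at e1 e2 e3
      have fA : (u.1+β*p.2.1) + (u.2.1+2*β*p.2.2.2)*(x₀+h/2) = 0 := by
        apply mul_left_cancel₀ hhk; rw [mul_zero]; linear_combination e1
      have fB : (u.2.2.1+β*p.2.2.1) + (u.2.2.2-2*β*p.2.2.2)*(y₀+k/2) = 0 := by
        apply mul_left_cancel₀ hhk; rw [mul_zero]; linear_combination e2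
      have fC : h^2*(u.2.1+2*β*p.2.2.2) - k^2*(u.2.2.2-2*β*p.2.2.2) = 0 := by
        apply mul_left_cancel₀ hhk; rw [mul_zero]
        linear_combination 6*e3 - 6*h*k*(2*x₀+h)*fA + 6*h*k*(2*y₀+k)*fB
      refine ⟨fA, fB, fC, ?_⟩
      rw [hFv]; exact (divmain u).symm.trans h2
    · rintro ⟨fA, fB, fC, fD⟩
      constructor
      · intro χ
        rw [main u χ]
        linear_combination (h*k*χ.2.1 + h*k*(2*x₀+h)*χ.2.2.2)*fA
          + (h*k*χ.2.2.1 - h*k*(2*y₀+k)*χ.2.2.2)*fB + (h*k/6*χ.2.2.2)*fC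
      · rw [divmain u, ← hFv]; exact fD
  constructor
  · -- existence and uniqueness
    apply existsUnique_of_exists_of_unique
    · refine ⟨(-(((k^2*(Fv/(h*k))/(h^2+k^2) - 2*β*p.2.2.2)+2*β*p.2.2.2)*(x₀+h/2)) - β*p.2.1,
             k^2*(Fv/(h*k))/(h^2+k^2) - 2*β*p.2.2.2,
             -(((h^2*(Fv/(h*k))/(h^2+k^2) + 2*β*p.2.2.2)-2*β*p.2.2.2)*(y₀+k/2)) - β*p.2.2.1,
             h^2*(Fv/(h*k))/(h^2+k^2) + 2*β*p.2.2.2), (cond_iff _).mpr ?_⟩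
      refine ⟨?_, ?_, ?_, ?_⟩ <;>
        simp only [] <;> (field_simp [hh.ne', hk.ne', hh2k2]; try ring)
    · intro v w hv hw
      obtain ⟨vA, vB, vC, vD⟩ := (cond_iff v).mp hv
      obtain ⟨wA, wB, wC, wD⟩ := (cond_iff w).mp hw
      have hbd : v.2.1 + v.2.2.2 = w.2.1 + w.2.2.2 :=
        mul_left_cancel₀ hhk (vD.trans wD.symm)
      have hb : v.2.1 = w.2.1 := by
        apply mul_left_cancel₀ hh2k2
        linear_combination vC - wC + k^2*hbd
      have hd : v.2.2.2 = w.2.2.2 := by linarith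
      have ha : v.1 = w.1 := by linear_combination vA - wA - (x₀+h/2)*hb
      have hc : v.2.2.1 = w.2.2.1 := by linear_combination vB - wB - (y₀+k/2)*hd
      exact Prod.ext ha (Prod.ext hb (Prod.ext hc hd))
  · -- recovery formula
    intro u hu φ hφ i
    obtain ⟨fA, fB, fC, fD⟩ := (cond_iff u).mp hu
    have Jφ := (main u (φ i)).symm.trans (hu.1 (φ i))
    have T1 : (∫ x in x₀..(x₀+h), ∫ y in y₀..(y₀+k), Fv/(h*k) * rtphi (φ i) x y)
        = Fv/(h*k) * (h*k*((φ i).1 + (φ i).2.1*(x₀+h/2) + (φ i).2.2.1*(y₀+k/2)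
            + (φ i).2.2.2*(x₀^2+x₀*h+h^2/3 - y₀^2-y₀*k-k^2/3))) :=
      (int2 x₀ y₀ h k _
        (Fv/(h*k)*(φ i).1) (Fv/(h*k)*(φ i).2.1) (Fv/(h*k)*(φ i).2.2.2)
        (Fv/(h*k)*(φ i).2.2.1) 0 0 (-(Fv/(h*k)*(φ i).2.2.2)) 0 0
        (fun x y => by simp only [rtphi]; ring)).trans (by ring)
    have T2 : (∫ x in x₀..(x₀+h), ∫ y in y₀..(y₀+k),
          β * ((p.2.1 + 2*p.2.2.2*x) * ((φ i).2.1 + 2*(φ i).2.2.2*x)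
            + (p.2.2.1 - 2*p.2.2.2*y) * ((φ i).2.2.1 - 2*(φ i).2.2.2*y)))
        = ((β*(p.2.1*(φ i).2.1 + p.2.2.1*(φ i).2.2.1))*h
            + (β*(2*p.2.2.2*(φ i).2.1 + 2*p.2.1*(φ i).2.2.2))*((x₀+h)^2-x₀^2)/2
            + (β*(4*p.2.2.2*(φ i).2.2.2))*((x₀+h)^3-x₀^3)/3)*k
          + (β*(-2*p.2.2.1*(φ i).2.2.2 - 2*p.2.2.2*(φ i).2.2.1))*h*((y₀+k)^2-y₀^2)/2
          + (β*(4*p.2.2.2*(φ i).2.2.2))*h*((y₀+k)^3-y₀^3)/3 :=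
      (int2 x₀ y₀ h k _
        (β*(p.2.1*(φ i).2.1 + p.2.2.1*(φ i).2.2.1))
        (β*(2*p.2.2.2*(φ i).2.1 + 2*p.2.1*(φ i).2.2.2))
        (β*(4*p.2.2.2*(φ i).2.2.2))
        (β*(-2*p.2.2.1*(φ i).2.2.2 - 2*p.2.2.2*(φ i).2.2.1))
        0 0
        (β*(4*p.2.2.2*(φ i).2.2.2))
        0 0
        (fun x y => by ring)).trans (by ring)
    have eB : (∫ t in x₀..(x₀+h), rtphi (φ i) t y₀)
        = h*((φ i).1 + (φ i).2.2.1*y₀ - (φ i).2.2.2*y₀^2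
            + (φ i).2.1*(x₀+h/2) + (φ i).2.2.2*(x₀^2+x₀*h+h^2/3)) :=
      (int1 x₀ (x₀+h) ((φ i).1 + (φ i).2.2.1*y₀ - (φ i).2.2.2*y₀^2) ((φ i).2.1) ((φ i).2.2.2)
        _ (fun t => by simp only [rtphi]; ring)).trans (by ring)
    have eT : (∫ t in x₀..(x₀+h), rtphi (φ i) t (y₀+k))
        = h*((φ i).1 + (φ i).2.2.1*(y₀+k) - (φ i).2.2.2*(y₀+k)^2
            + (φ i).2.1*(x₀+h/2) + (φ i).2.2.2*(x₀^2+x₀*h+h^2/3)) :=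
      (int1 x₀ (x₀+h) ((φ i).1 + (φ i).2.2.1*(y₀+k) - (φ i).2.2.2*(y₀+k)^2) ((φ i).2.1) ((φ i).2.2.2)
        _ (fun t => by simp only [rtphi]; ring)).trans (by ring)
    have eR : (∫ t in y₀..(y₀+k), rtphi (φ i) (x₀+h) t)
        = k*((φ i).1 + (φ i).2.1*(x₀+h) + (φ i).2.2.2*(x₀+h)^2
            + (φ i).2.2.1*(y₀+k/2) - (φ i).2.2.2*(y₀^2+y₀*k+k^2/3)) :=
      (int1 y₀ (y₀+k) ((φ i).1 + (φ i).2.1*(x₀+h) + (φ i).2.2.2*(x₀+h)^2) ((φ i).2.2.1) (-(φ i).2.2.2)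
        _ (fun t => by simp only [rtphi]; ring)).trans (by ring)
    have eL : (∫ t in y₀..(y₀+k), rtphi (φ i) x₀ t)
        = k*((φ i).1 + (φ i).2.1*x₀ + (φ i).2.2.2*x₀^2
            + (φ i).2.2.1*(y₀+k/2) - (φ i).2.2.2*(y₀^2+y₀*k+k^2/3)) :=
      (int1 y₀ (y₀+k) ((φ i).1 + (φ i).2.1*x₀ + (φ i).2.2.2*x₀^2) ((φ i).2.2.1) (-(φ i).2.2.2)
        _ (fun t => by simp only [rtphi]; ring)).trans (by ring)
    have h0 := hφ i 0
    have h1 := hφ i 1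
    have h2 := hφ i 2
    have h3 := hφ i 3
    simp only [rtEdgeAvg, Matrix.cons_val_zero, Matrix.cons_val_one, Matrix.head_cons,
      Matrix.cons_val_two, Matrix.cons_val_three, Matrix.tail_cons] at h0 h1 h2 h3
    rw [eB, one_div, inv_mul_cancel_left₀ hh.ne'] at h0
    rw [eR, one_div, inv_mul_cancel_left₀ hk.ne'] at h1
    rw [eT, one_div, inv_mul_cancel_left₀ hh.ne'] at h2
    rw [eL, one_div, inv_mul_cancel_left₀ hk.ne'] at h3
    rw [T1, T2, show Fv/(h*k) = u.2.1 + u.2.2.2 from by rw [← fD, mul_div_cancel_left₀ _ hhk]]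
    generalize hq : φ i = q at Jφ h0 h1 h2 h3 ⊢
    fin_cases i <;>
      (simp at h0 h1 h2 h3) <;>
      (simp [edgeLen, rtUN]) <;>
      linear_combination (h*(u.2.2.1 + u.2.2.2*y₀))*h0 - (k*(u.1 + u.2.1*(x₀+h)))*h1
        - (h*(u.2.2.1 + u.2.2.2*(y₀+k)))*h2 + (k*(u.1 + u.2.1*x₀))*h3 + Jφ
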